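/- There exists a unique continuous function u: [0,1] → ℝ³ with u(0) = (1,0,0), u(1) = (0,1,0), u(t/2) = M_0·u(t) and u((t+1)/2) = M_1·u(t) for all t ∈ [0,1]. -/

import Mathlib

noncomputable def M0 : Matrix (Fin 3) (Fin 3) ℝ :=
  (1/5 : ℝ) • !![5, 2, 2; 0, 2, 1; 0, 1, 2]

noncomputable def M1 : Matrix (Fin 3) (Fin 3) ℝ :=
  (1/5 : ℝ) • !![2, 0, 1; 2, 5, 2; 1, 0, 2]

/-- `u` is a continuous function on `[0,1]` satisfying the boundary conditions
and the self-similarity relations. -/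
def IsHarmonicSide (u : ℝ → (Fin 3 → ℝ)) : Prop :=
  ContinuousOn u (Set.Icc 0 1) ∧
  u 0 = ![1, 0, 0] ∧ u 1 = ![0, 1, 0] ∧
  (∀ t ∈ Set.Icc (0:ℝ) 1, u (t / 2) = M0.mulVec (u t)) ∧
  (∀ t ∈ Set.Icc (0:ℝ) 1, u ((t + 1) / 2) = M1.mulVec (u t))

lemma m0_apply (v : Fin 3 → ℝ) :
    M0.mulVec v = ![v 0 + 2/5*v 1 + 2/5*v 2, 2/5*v 1 + 1/5*v 2, 1/5*v 1 + 2/5*v 2] := by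
  funext i
  fin_cases i <;>
    simp [M0, Matrix.mulVec, dotProduct, Fin.sum_univ_three] <;>
      first | ring1 | exact Or.inl (by norm_num)

lemma m1_apply (v : Fin 3 → ℝ) :
    M1.mulVec v = ![2/5*v 0 + 1/5*v 2, 2/5*v 0 + v 1 + 2/5*v 2, 1/5*v 0 + 2/5*v 2] := by
  funext i
  fin_cases i <;>
    simp [M1, Matrix.mulVec, dotProduct, Fin.sum_univ_three] <;>
      first | ring1 | exact Or.inl (by norm_num)

lemma m0_sum (v : Fin 3 → ℝ) :
    (M0.mulVec v) 0 + (M0.mulVec v) 1 + (M0.mulVec v) 2 = v 0 + v 1 + v 2 := by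
  rw [m0_apply]; simp; ring

lemma m1_sum (v : Fin 3 → ℝ) :
    (M1.mulVec v) 0 + (M1.mulVec v) 1 + (M1.mulVec v) 2 = v 0 + v 1 + v 2 := by
  rw [m1_apply]; simp; ring

lemma m0_norm (v : Fin 3 → ℝ) : ‖M0.mulVec v‖ ≤ 3 * ‖v‖ := by
  obtain ⟨a0, b0⟩ := abs_le.mp (show |v 0| ≤ ‖v‖ by simpa using norm_le_pi_norm v 0)
  obtain ⟨a1, b1⟩ := abs_le.mp (show |v 1| ≤ ‖v‖ by simpa using norm_le_pi_norm v 1)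
  obtain ⟨a2, b2⟩ := abs_le.mp (show |v 2| ≤ ‖v‖ by simpa using norm_le_pi_norm v 2)
  have hv : (0:ℝ) ≤ ‖v‖ := norm_nonneg v
  apply (pi_norm_le_iff_of_nonneg (by linarith)).mpr
  intro i
  rw [m0_apply]
  fin_cases i
  · show |v 0 + 2/5*v 1 + 2/5*v 2| ≤ 3*‖v‖
    rw [abs_le]; constructor <;> linarith
  · show |2/5*v 1 + 1/5*v 2| ≤ 3*‖v‖
    rw [abs_le]; constructor <;> linarith
  · show |1/5*v 1 + 2/5*v 2| ≤ 3*‖v‖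
    rw [abs_le]; constructor <;> linarith

lemma m1_norm (v : Fin 3 → ℝ) : ‖M1.mulVec v‖ ≤ 3 * ‖v‖ := by
  obtain ⟨a0, b0⟩ := abs_le.mp (show |v 0| ≤ ‖v‖ by simpa using norm_le_pi_norm v 0)
  obtain ⟨a1, b1⟩ := abs_le.mp (show |v 1| ≤ ‖v‖ by simpa using norm_le_pi_norm v 1)
  obtain ⟨a2, b2⟩ := abs_le.mp (show |v 2| ≤ ‖v‖ by simpa using norm_le_pi_norm v 2)
  have hv : (0:ℝ) ≤ ‖v‖ := norm_nonneg v
  apply (pi_norm_le_iff_of_nonneg (by linarith)).mpr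
  intro i
  rw [m1_apply]
  fin_cases i
  · show |2/5*v 0 + 1/5*v 2| ≤ 3*‖v‖
    rw [abs_le]; constructor <;> linarith
  · show |2/5*v 0 + v 1 + 2/5*v 2| ≤ 3*‖v‖
    rw [abs_le]; constructor <;> linarith
  · show |1/5*v 0 + 2/5*v 2| ≤ 3*‖v‖
    rw [abs_le]; constructor <;> linarith

lemma m0_dist (a b : Fin 3 → ℝ) (h : a 0 + a 1 + a 2 = b 0 + b 1 + b 2) :
    dist (M0.mulVec a) (M0.mulVec b) ≤ 3/5 * dist a b := by
  have hd : (0:ℝ) ≤ dist a b := dist_nonneg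
  obtain ⟨a0, b0⟩ := abs_le.mp (show |a 0 - b 0| ≤ dist a b by
    simpa [Real.dist_eq] using dist_le_pi_dist a b 0)
  obtain ⟨a1, b1⟩ := abs_le.mp (show |a 1 - b 1| ≤ dist a b by
    simpa [Real.dist_eq] using dist_le_pi_dist a b 1)
  obtain ⟨a2, b2⟩ := abs_le.mp (show |a 2 - b 2| ≤ dist a b by
    simpa [Real.dist_eq] using dist_le_pi_dist a b 2)
  apply (dist_pi_le_iff (by linarith)).mpr
  intro i
  rw [m0_apply, m0_apply]
  fin_cases i
  · show dist (a 0 + 2/5*a 1 + 2/5*a 2) (b 0 + 2/5*b 1 + 2/5*b 2) ≤ 3/5 * dist a b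
    rw [Real.dist_eq, abs_le]
    constructor <;> nlinarith
  · show dist (2/5*a 1 + 1/5*a 2) (2/5*b 1 + 1/5*b 2) ≤ 3/5 * dist a b
    rw [Real.dist_eq, abs_le]
    constructor <;> nlinarith
  · show dist (1/5*a 1 + 2/5*a 2) (1/5*b 1 + 2/5*b 2) ≤ 3/5 * dist a b
    rw [Real.dist_eq, abs_le]
    constructor <;> nlinarith

lemma m1_dist (a b : Fin 3 → ℝ) (h : a 0 + a 1 + a 2 = b 0 + b 1 + b 2) :
    dist (M1.mulVec a) (M1.mulVec b) ≤ 3/5 * dist a b := by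
  have hd : (0:ℝ) ≤ dist a b := dist_nonneg
  obtain ⟨a0, b0⟩ := abs_le.mp (show |a 0 - b 0| ≤ dist a b by
    simpa [Real.dist_eq] using dist_le_pi_dist a b 0)
  obtain ⟨a1, b1⟩ := abs_le.mp (show |a 1 - b 1| ≤ dist a b by
    simpa [Real.dist_eq] using dist_le_pi_dist a b 1)
  obtain ⟨a2, b2⟩ := abs_le.mp (show |a 2 - b 2| ≤ dist a b by
    simpa [Real.dist_eq] using dist_le_pi_dist a b 2)
  apply (dist_pi_le_iff (by linarith)).mpr
  intro i
  rw [m1_apply, m1_apply]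
  fin_cases i
  · show dist (2/5*a 0 + 1/5*a 2) (2/5*b 0 + 1/5*b 2) ≤ 3/5 * dist a b
    rw [Real.dist_eq, abs_le]
    constructor <;> nlinarith
  · show dist (2/5*a 0 + a 1 + 2/5*a 2) (2/5*b 0 + b 1 + 2/5*b 2) ≤ 3/5 * dist a b
    rw [Real.dist_eq, abs_le]
    constructor <;> nlinarith
  · show dist (1/5*a 0 + 2/5*a 2) (1/5*b 0 + 2/5*b 2) ≤ 3/5 * dist a b
    rw [Real.dist_eq, abs_le]
    constructor <;> nlinarith
lemma cont_mulVec (M : Matrix (Fin 3) (Fin 3) ℝ) : Continuous (M.mulVec) := by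
  unfold Matrix.mulVec dotProduct
  exact continuous_pi fun i => continuous_finset_sum _ fun j _ =>
    (continuous_const.mul (continuous_apply j))

open BoundedContinuousFunction in
noncomputable def S : Set (ℝ →ᵇ (Fin 3 → ℝ)) :=
  {f | f 0 = ![1, 0, 0] ∧ f 1 = ![0, 1, 0] ∧ ∀ t, f t 0 + f t 1 + f t 2 = 1}

lemma isClosed_S : IsClosed S := by
  have hev : ∀ t : ℝ, Continuous fun f : BoundedContinuousFunction ℝ (Fin 3 → ℝ) => f t :=
    fun t => continuous_eval_const t
  have h1 : IsClosed {f : BoundedContinuousFunction ℝ (Fin 3 → ℝ) | f 0 = ![1,0,0]} :=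
    isClosed_eq (hev 0) continuous_const
  have h2 : IsClosed {f : BoundedContinuousFunction ℝ (Fin 3 → ℝ) | f 1 = ![0,1,0]} :=
    isClosed_eq (hev 1) continuous_const
  have h3 : IsClosed {f : BoundedContinuousFunction ℝ (Fin 3 → ℝ) |
      ∀ t, f t 0 + f t 1 + f t 2 = 1} := by
    have : {f : BoundedContinuousFunction ℝ (Fin 3 → ℝ) | ∀ t, f t 0 + f t 1 + f t 2 = 1} =
        ⋂ t : ℝ, {f | f t 0 + f t 1 + f t 2 = 1} := by
      ext f; simp
    rw [this]
    refine isClosed_iInter fun t => isClosed_eq ?_ continuous_const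
    have c0 : Continuous fun f : BoundedContinuousFunction ℝ (Fin 3 → ℝ) => f t :=
      hev t
    exact (((continuous_apply 0).comp c0).add ((continuous_apply 1).comp c0)).add ((continuous_apply 2).comp c0)
  exact (h1.inter (h2.inter h3))

instance : CompleteSpace S := isClosed_S.completeSpace_coe

noncomputable def clamp (t : ℝ) : ℝ := max 0 (min 1 t)

lemma clamp_mem (t : ℝ) : clamp t ∈ Set.Icc (0:ℝ) 1 := by
  constructor
  · exact le_max_left _ _
  · exact max_le zero_le_one (min_le_left 1 t)

lemma clamp_of_mem {t : ℝ} (h : t ∈ Set.Icc (0:ℝ) 1) : clamp t = t := by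
  obtain ⟨h0, h1⟩ := h
  simp [clamp, min_eq_right h1, max_eq_right h0]

lemma clamp_of_nonpos {t : ℝ} (h : t ≤ 0) : clamp t = 0 :=
  max_eq_left (le_trans (min_le_right 1 t) h)

lemma clamp_of_ge_one {t : ℝ} (h : 1 ≤ t) : clamp t = 1 := by
  simp [clamp, min_eq_left h]

lemma continuous_clamp : Continuous clamp :=
  continuous_const.max (continuous_const.min continuous_id)

noncomputable def base : BoundedContinuousFunction ℝ (Fin 3 → ℝ) :=
  BoundedContinuousFunction.ofNormedAddCommGroup
    (fun t => ![1 - clamp t, clamp t, 0])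
    (by
      refine continuous_pi fun i => ?_
      fin_cases i
      · exact continuous_const.sub continuous_clamp
      · exact continuous_clamp
      · exact continuous_const)
    2
    (by
      intro t
      obtain ⟨h0, h1⟩ := clamp_mem t
      apply (pi_norm_le_iff_of_nonneg (by norm_num)).mpr
      intro i
      fin_cases i
      · show |1 - clamp t| ≤ 2
        rw [abs_le]; constructor <;> linarith
      · show |clamp t| ≤ 2
        rw [abs_le]; constructor <;> linarith
      · show |(0:ℝ)| ≤ 2
        norm_num)

lemma base_mem : base ∈ S := by
  refine ⟨?_, ?_, ?_⟩
  · show ![1 - clamp 0, clamp 0, (0:ℝ)] = ![1,0,0]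
    rw [show clamp 0 = 0 from clamp_of_nonpos le_rfl]
    norm_num
  · show ![1 - clamp 1, clamp 1, (0:ℝ)] = ![0,1,0]
    rw [show clamp 1 = 1 from clamp_of_ge_one le_rfl]
    norm_num
  · intro t
    show (1 - clamp t) + clamp t + 0 = 1
    ring

instance : Nonempty S := ⟨⟨base, base_mem⟩⟩

noncomputable def Tfun (f : BoundedContinuousFunction ℝ (Fin 3 → ℝ)) : ℝ → (Fin 3 → ℝ) :=
  fun t => if t ≤ 1/2 then M0.mulVec (f (2*t)) else M1.mulVec (f (2*t - 1))

lemma match_point {f : BoundedContinuousFunction ℝ (Fin 3 → ℝ)} (hf : f ∈ S) :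
    M0.mulVec (f 1) = M1.mulVec (f 0) := by
  rw [hf.1, hf.2.1, m0_apply, m1_apply]
  norm_num [Matrix.cons_val_two]

lemma Tfun_cont {f : BoundedContinuousFunction ℝ (Fin 3 → ℝ)} (hf : f ∈ S) :
    Continuous (Tfun f) := by
  apply Continuous.if_le
  · exact (cont_mulVec M0).comp (f.continuous.comp (continuous_const.mul continuous_id))
  · exact (cont_mulVec M1).comp
      (f.continuous.comp ((continuous_const.mul continuous_id).sub continuous_const))
  · exact continuous_id
  · exact continuous_const
  · intro t ht
    subst ht
    rw [show (2 : ℝ) * (1/2) - 1 = 0 by norm_num, show (2:ℝ) * (1/2) = 1 by norm_num]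
    exact match_point hf

lemma Tfun_norm {f : BoundedContinuousFunction ℝ (Fin 3 → ℝ)} (t : ℝ) :
    ‖Tfun f t‖ ≤ 3 * ‖f‖ := by
  unfold Tfun
  split
  · exact le_trans (m0_norm _) (by
      have := f.norm_coe_le_norm (2*t); linarith)
  · exact le_trans (m1_norm _) (by
      have := f.norm_coe_le_norm (2*t - 1); linarith)

noncomputable def T (f : S) : S := by
  refine ⟨BoundedContinuousFunction.ofNormedAddCommGroup (Tfun f.1) (Tfun_cont f.2)
    (3 * ‖f.1‖) Tfun_norm, ?_, ?_, ?_⟩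
  · show Tfun f.1 0 = ![1,0,0]
    rw [show Tfun f.1 0 = M0.mulVec (f.1 (2*0)) from if_pos (by norm_num)]
    rw [show (2:ℝ) * 0 = 0 by norm_num, f.2.1, m0_apply]
    norm_num [Matrix.cons_val_two]
  · show Tfun f.1 1 = ![0,1,0]
    rw [show Tfun f.1 1 = M1.mulVec (f.1 (2*1 - 1)) from if_neg (by norm_num)]
    rw [show (2:ℝ) * 1 - 1 = 1 by norm_num, f.2.2.1, m1_apply]
    norm_num [Matrix.cons_val_two]
  · intro t
    show Tfun f.1 t 0 + Tfun f.1 t 1 + Tfun f.1 t 2 = 1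
    unfold Tfun
    split
    · rw [m0_sum]; exact f.2.2.2 _
    · rw [m1_sum]; exact f.2.2.2 _

lemma T_apply (f : S) (t : ℝ) : (T f).1 t = Tfun f.1 t := rfl

lemma T_dist (f g : S) : dist (T f) (T g) ≤ 3/5 * dist f g := by
  rw [Subtype.dist_eq, Subtype.dist_eq]
  have hd : (0:ℝ) ≤ dist f.1 g.1 := dist_nonneg
  apply (BoundedContinuousFunction.dist_le (by linarith)).mpr
  intro t
  show dist (Tfun f.1 t) (Tfun g.1 t) ≤ 3/5 * dist f.1 g.1
  unfold Tfun
  split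
  · refine le_trans (m0_dist _ _ ?_) ?_
    · rw [f.2.2.2, g.2.2.2]
    · have := BoundedContinuousFunction.dist_coe_le_dist (f := f.1) (g := g.1) (2*t)
      linarith
  · refine le_trans (m1_dist _ _ ?_) ?_
    · rw [f.2.2.2, g.2.2.2]
    · have := BoundedContinuousFunction.dist_coe_le_dist (f := f.1) (g := g.1) (2*t - 1)
      linarith

lemma T_contracting : ContractingWith (3/5 : NNReal) T := by
  constructor
  · rw [← NNReal.coe_lt_coe]; push_cast; norm_num
  · apply LipschitzWith.of_dist_le_mul
    intro f g
    have : ((3/5 : NNReal) : ℝ) = 3/5 := by norm_num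
    rw [this]
    exact T_dist f g


noncomputable def u0 : S := ContractingWith.fixedPoint T T_contracting

lemma u0_fixed_apply (t : ℝ) : u0.1 t = Tfun u0.1 t := by
  have h : T u0 = u0 := T_contracting.fixedPoint_isFixedPt
  conv_lhs => rw [← h]
  rfl

lemma u0_harmonic : IsHarmonicSide (fun t => u0.1 t) := by
  refine ⟨u0.1.continuous.continuousOn, u0.2.1, u0.2.2.1, ?_, ?_⟩
  · intro t ht
    show u0.1 (t/2) = M0.mulVec (u0.1 t)
    rw [u0_fixed_apply (t/2)]
    rw [show Tfun u0.1 (t/2) = M0.mulVec (u0.1 (2*(t/2))) from if_pos (by linarith [ht.2])]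
    rw [show 2*(t/2) = t by ring]
  · intro t ht
    show u0.1 ((t+1)/2) = M1.mulVec (u0.1 t)
    rcases eq_or_lt_of_le ht.1 with h0 | h0
    · subst h0
      rw [u0_fixed_apply ((0+1)/2)]
      rw [show Tfun u0.1 ((0+1)/2) = M0.mulVec (u0.1 (2*((0+1)/2))) from if_pos (by norm_num)]
      rw [show (2:ℝ)*((0+1)/2) = 1 by norm_num]
      exact match_point u0.2
    · rw [u0_fixed_apply ((t+1)/2)]
      rw [show Tfun u0.1 ((t+1)/2) = M1.mulVec (u0.1 (2*((t+1)/2) - 1)) from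
        if_neg (by push_neg; linarith)]
      rw [show 2*((t+1)/2) - 1 = t by ring]

/-- Existence and uniqueness (as a function on `[0,1]`). -/
theorem stmt_17 :
    ∃ u : ℝ → (Fin 3 → ℝ), IsHarmonicSide u ∧
      ∀ v : ℝ → (Fin 3 → ℝ), IsHarmonicSide v →
        Set.EqOn v u (Set.Icc 0 1) := by
  refine ⟨fun t => u0.1 t, u0_harmonic, ?_⟩
  intro v hv
  obtain ⟨hvc, hv0, hv1, hrel0, hrel1⟩ := hv
  -- sums are 1 on [0,1]
  have hsum : ∀ t ∈ Set.Icc (0:ℝ) 1, v t 0 + v t 1 + v t 2 = 1 := by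
    intro t ht
    set s : ℝ → ℝ := fun x => v x 0 + v x 1 + v x 2 with hs
    have hscont : ContinuousOn s (Set.Icc 0 1) :=
      (((continuous_apply 0).comp_continuousOn hvc).add
        ((continuous_apply 1).comp_continuousOn hvc)).add
        ((continuous_apply 2).comp_continuousOn hvc)
    have h1pow : ∀ n : ℕ, (1:ℝ) ≤ 2^n := fun n => one_le_pow₀ (by norm_num)
    have hmem : ∀ n : ℕ, t / 2^n ∈ Set.Icc (0:ℝ) 1 := by
      intro n
      have h2 : (0:ℝ) < 2^n := by positivity
      refine ⟨div_nonneg ht.1 (by positivity), ?_⟩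
      rw [div_le_one h2]
      exact le_trans ht.2 (h1pow n)
    have hconst : ∀ n : ℕ, s (t / 2^n) = s t := by
      intro n
      induction n with
      | zero => norm_num
      | succ n ih =>
        have h2 : t / 2^(n+1) = (t / 2^n)/2 := by
          rw [pow_succ]; ring
        calc s (t / 2^(n+1)) = s ((t / 2^n)/2) := by rw [h2]
          _ = s (t / 2^n) := by
              show (v ((t / 2^n)/2)) 0 + _ + _ = _
              rw [hrel0 _ (hmem n)]
              exact m0_sum _
          _ = s t := ih
    have hlim0 : Filter.Tendsto (fun n : ℕ => t / 2^n) Filter.atTop (nhds 0) := by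
      have hh : Filter.Tendsto (fun n : ℕ => ((1:ℝ)/2)^n) Filter.atTop (nhds 0) := by
        apply tendsto_pow_atTop_nhds_zero_of_lt_one <;> norm_num
      have := hh.const_mul t
      simp only [mul_zero] at this
      convert this using 2 with n
      rw [div_pow, one_pow]
      ring
    have hlim : Filter.Tendsto (fun n : ℕ => s (t / 2^n)) Filter.atTop (nhds (s 0)) := by
      have hcw : ContinuousWithinAt s (Set.Icc 0 1) 0 := hscont 0 ⟨le_rfl, zero_le_one⟩
      apply hcw.tendsto.comp
      rw [tendsto_nhdsWithin_iff]
      exact ⟨hlim0, Filter.Eventually.of_forall fun n => hmem n⟩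
    have hst : s t = s 0 := by
      apply tendsto_nhds_unique (f := fun n : ℕ => s (t / 2^n)) _ hlim
      simp only [hconst]
      exact tendsto_const_nhds
    have hs0 : s 0 = 1 := by
      simp only [hs, hv0]
      norm_num [Matrix.cons_val_two]
    show s t = 1
    rw [hst, hs0]
  -- boundedness of v on [0,1]
  obtain ⟨C, hC⟩ := isCompact_Icc.exists_bound_of_continuousOn hvc
  have hvbc : Continuous (fun t => v (clamp t)) :=
    hvc.comp_continuous continuous_clamp clamp_mem
  set vb : BoundedContinuousFunction ℝ (Fin 3 → ℝ) :=
    BoundedContinuousFunction.ofNormedAddCommGroup (fun t => v (clamp t)) hvbc C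
      (fun t => hC _ (clamp_mem t)) with hvb
  have hvbt : ∀ t : ℝ, vb t = v (clamp t) := fun t => rfl
  have hmemS : vb ∈ S := by
    refine ⟨?_, ?_, ?_⟩
    · rw [hvbt, clamp_of_nonpos le_rfl, hv0]
    · rw [hvbt, clamp_of_ge_one le_rfl, hv1]
    · intro t
      rw [hvbt]
      exact hsum _ (clamp_mem t)
  -- vb is a fixed point of T
  have hfix : Function.IsFixedPt T ⟨vb, hmemS⟩ := by
    apply Subtype.ext
    apply BoundedContinuousFunction.ext
    intro t
    show Tfun vb t = vb t
    unfold Tfun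
    split
    · next hle =>
      rw [hvbt, hvbt]
      rcases le_or_gt t 0 with ht0 | ht0
      · rw [clamp_of_nonpos ht0, clamp_of_nonpos (by linarith)]
        have := hrel0 0 ⟨le_rfl, zero_le_one⟩
        rw [show (0:ℝ)/2 = 0 by norm_num] at this
        exact this.symm
      · rw [clamp_of_mem ⟨le_of_lt ht0, by linarith⟩,
          clamp_of_mem ⟨by linarith, by linarith⟩]
        have := hrel0 (2*t) ⟨by linarith, by linarith⟩
        rw [show 2*t/2 = t by ring] at this
        exact this.symm
    · next hle =>
      push_neg at hle
      rw [hvbt, hvbt]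
      rcases le_or_gt 1 t with ht1 | ht1
      · rw [clamp_of_ge_one ht1, clamp_of_ge_one (by linarith)]
        have := hrel1 1 ⟨zero_le_one, le_rfl⟩
        rw [show ((1:ℝ)+1)/2 = 1 by norm_num] at this
        exact this.symm
      · rw [clamp_of_mem ⟨by linarith, le_of_lt ht1⟩,
          clamp_of_mem ⟨by linarith, by linarith⟩]
        have := hrel1 (2*t - 1) ⟨by linarith, by linarith⟩
        rw [show (2*t - 1 + 1)/2 = t by ring] at this
        exact this.symm
  have heq : (⟨vb, hmemS⟩ : S) = u0 := T_contracting.fixedPoint_unique hfix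
  intro t ht
  have h1 : vb t = u0.1 t := congrFun (congrArg (fun x : S => (x.1 : ℝ → Fin 3 → ℝ)) heq) t
  show v t = u0.1 t
  rw [← h1, hvbt, clamp_of_mem ht]
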